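/- Let p be a prime and let A, X be sums of cycles such that p divides every element of L(X). Then (A⊟p)·(X⊘p) = (A·X)⊘p, where A⊟p is the contraction of A by p. -/

import Mathlib

/-- A sum of cycles has all cycle lengths positive. -/
def Pos (A : ℕ →₀ ℕ) : Prop := ∀ a ∈ A.support, 0 < a

/-- The single cycle of length `n`. -/
noncomputable def Cyc (n : ℕ) : ℕ →₀ ℕ := Finsupp.single n 1

/-- Product of sums of cycles: `C_a · C_x = gcd(a,x) C_{lcm(a,x)}`, extended by distributivity. -/
noncomputable def cmul (A X : ℕ →₀ ℕ) : ℕ →₀ ℕ :=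
  A.sum fun a m => X.sum fun x n => (m * n * Nat.gcd a x) • Finsupp.single (Nat.lcm a x) 1

/-- Number of vertices of a sum of cycles. -/
def size (A : ℕ →₀ ℕ) : ℕ := A.sum fun ℓ m => ℓ * m

/-- The support `L(A,B)` of an instance. -/
def instSupp (A B : ℕ →₀ ℕ) : Set ℕ :=
  {x | 0 < x ∧ x ≤ size B / size A ∧ ∀ a ∈ A.support, Nat.lcm a x ∈ B.support}

/-- Consistency: `L(A) ∨ L(A,B) = L(B)`. -/
def Consistent (A B : ℕ →₀ ℕ) : Prop :=
  {ℓ | ∃ a ∈ A.support, ∃ x ∈ instSupp A B, Nat.lcm a x = ℓ} = ↑B.support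

/-- Cycle length multiplication `A ⊗ p`. -/
noncomputable def otimes (A : ℕ →₀ ℕ) (p : ℕ) : ℕ →₀ ℕ :=
  A.mapDomain (fun a => p * a)

/-- Cycle length division `A ⊘ p`: `(A ⊘ p)(a) = A (p*a)`. -/
noncomputable def oslash (A : ℕ →₀ ℕ) (p : ℕ) : ℕ →₀ ℕ :=
  if hp : p = 0 then 0 else
    Finsupp.comapDomain (fun a => p * a) A ((mul_right_injective₀ hp).injOn)

/-- Contraction `A ⊟ p`: each cycle of length `p*a` becomes `p` cycles of length `a`. -/
noncomputable def contract (A : ℕ →₀ ℕ) (p : ℕ) : ℕ →₀ ℕ :=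
  A.filter (fun a => ¬ p ∣ a) + p • oslash A p

/-! ### Auxiliary lemmas -/

lemma oslash_apply (M : ℕ →₀ ℕ) {p : ℕ} (hp : p ≠ 0) (c : ℕ) :
    oslash M p c = M (p * c) := by
  simp [oslash, hp, Finsupp.comapDomain_apply]

lemma oslash_add (M N : ℕ →₀ ℕ) {p : ℕ} (hp : p ≠ 0) :
    oslash (M + N) p = oslash M p + oslash N p := by
  ext c; simp [oslash_apply _ hp]

lemma oslash_zero {p : ℕ} (hp : p ≠ 0) : oslash 0 p = 0 := by
  ext c; simp [oslash_apply _ hp]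

lemma oslash_single_mul {p : ℕ} (hp : p ≠ 0) (b k : ℕ) :
    oslash (Finsupp.single (p * b) k) p = Finsupp.single b k := by
  ext c
  rw [oslash_apply _ hp]
  simp [Finsupp.single_apply, hp, Nat.pos_of_ne_zero hp]

lemma oslash_single_not_dvd {p L : ℕ} (hp : p ≠ 0) (h : ¬ p ∣ L) (k : ℕ) :
    oslash (Finsupp.single L k) p = 0 := by
  ext c
  rw [oslash_apply _ hp]
  simp only [Finsupp.single_apply, Finsupp.coe_zero, Pi.zero_apply]
  rw [if_neg]; rintro rfl; exact h ⟨c, rfl⟩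

lemma oslash_smul (M : ℕ →₀ ℕ) {p : ℕ} (hp : p ≠ 0) (k : ℕ) :
    oslash (k • M) p = k • oslash M p := by
  ext c; simp [oslash_apply _ hp]

lemma otimes_single (a m p : ℕ) :
    otimes (Finsupp.single a m) p = Finsupp.single (p * a) m := by
  simp [otimes, Finsupp.mapDomain_single]

lemma otimes_zero (p : ℕ) : otimes 0 p = 0 := by
  simp [otimes]

lemma otimes_add (X Y : ℕ →₀ ℕ) (p : ℕ) :
    otimes (X + Y) p = otimes X p + otimes Y p := by
  simp [otimes, Finsupp.mapDomain_add]

lemma contract_single_not_dvd {p a : ℕ} (hp : p ≠ 0) (h : ¬ p ∣ a) (m : ℕ) :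
    contract (Finsupp.single a m) p = Finsupp.single a m := by
  classical
  ext c
  simp only [contract, Finsupp.add_apply, Finsupp.filter_apply, oslash_single_not_dvd hp h,
    smul_zero, Finsupp.coe_zero, Pi.zero_apply, add_zero]
  by_cases hc : p ∣ c
  · simp only [hc, not_true, if_false, Finsupp.single_apply]
    rw [if_neg]; rintro rfl; exact h hc
  · simp [hc]

lemma contract_single_mul {p : ℕ} (hp : p ≠ 0) (b m : ℕ) :
    contract (Finsupp.single (p * b) m) p = Finsupp.single b (p * m) := by
  classical
  ext c
  simp only [contract, Finsupp.add_apply, Finsupp.filter_apply, oslash_single_mul hp,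
    Finsupp.smul_apply, Finsupp.single_apply]
  by_cases hc : p ∣ c
  · simp [hc, smul_eq_mul]
  · have : ¬ p * b = c := by rintro rfl; exact hc ⟨b, rfl⟩
    simp [hc, this, smul_eq_mul]

lemma contract_zero {p : ℕ} (hp : p ≠ 0) : contract 0 p = 0 := by
  classical
  ext c
  simp [contract, oslash_zero hp, Finsupp.filter_apply]

lemma contract_add (A B : ℕ →₀ ℕ) {p : ℕ} (hp : p ≠ 0) :
    contract (A + B) p = contract A p + contract B p := by
  simp only [contract, Finsupp.filter_add, oslash_add _ _ hp, smul_add]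
  abel

lemma cmul_single_single (a m x n : ℕ) :
    cmul (Finsupp.single a m) (Finsupp.single x n)
      = (m * n * Nat.gcd a x) • Finsupp.single (Nat.lcm a x) 1 := by
  rw [cmul, Finsupp.sum_single_index, Finsupp.sum_single_index] <;> simp [Finsupp.sum_single_index]

lemma cmul_zero_left (X : ℕ →₀ ℕ) : cmul 0 X = 0 := by
  simp [cmul]

lemma cmul_zero_right (A : ℕ →₀ ℕ) : cmul A 0 = 0 := by
  simp [cmul]

lemma cmul_add_left (A B X : ℕ →₀ ℕ) : cmul (A + B) X = cmul A X + cmul B X := by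
  unfold cmul
  apply Finsupp.sum_add_index <;> intros <;> simp [add_mul, Finsupp.sum_add]

lemma cmul_add_right (A X Y : ℕ →₀ ℕ) : cmul A (X + Y) = cmul A X + cmul A Y := by
  unfold cmul
  rw [← Finsupp.sum_add]
  apply Finsupp.sum_congr
  intro a _
  apply Finsupp.sum_add_index <;> intros <;> simp [mul_add, add_mul]

lemma gcd_mul_right_coprime {p a : ℕ} (y : ℕ) (hp : p.Prime) (h : ¬ p ∣ a) :
    Nat.gcd a (p * y) = Nat.gcd a y :=
  Nat.Coprime.gcd_mul_left_cancel_right y (hp.coprime_iff_not_dvd.mpr h)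

lemma lcm_mul_right_coprime {p a : ℕ} (y : ℕ) (hp : p.Prime) (h : ¬ p ∣ a) :
    Nat.lcm a (p * y) = p * Nat.lcm a y := by
  have hg : Nat.gcd a y ∣ a * y := (Nat.gcd_dvd_right a y).mul_left a
  rw [Nat.lcm, Nat.lcm, gcd_mul_right_coprime y hp h,
    show a * (p * y) = p * (a * y) by ring, Nat.mul_div_assoc p hg]

/-- The single-single case of the key identity. -/
lemma key_single_single {p : ℕ} (hp : p.Prime) (a m y n : ℕ) :
    cmul (contract (Finsupp.single a m) p) (Finsupp.single y n)
      = oslash (cmul (Finsupp.single a m) (Finsupp.single (p * y) n)) p := by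
  have hp0 : p ≠ 0 := hp.ne_zero
  by_cases hpa : p ∣ a
  · obtain ⟨b, rfl⟩ := hpa
    rw [contract_single_mul hp0, cmul_single_single, cmul_single_single,
      Nat.lcm_mul_left, Nat.gcd_mul_left, oslash_smul _ hp0, oslash_single_mul hp0]
    rw [show p * m * n * Nat.gcd b y = m * n * (p * Nat.gcd b y) by ring]
  · rw [contract_single_not_dvd hp0 hpa, cmul_single_single, cmul_single_single,
      gcd_mul_right_coprime y hp hpa, lcm_mul_right_coprime y hp hpa,
      oslash_smul _ hp0, oslash_single_mul hp0]

/-- The single-left case of the key identity, for arbitrary right factor. -/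
lemma key_single {p : ℕ} (hp : p.Prime) (a m : ℕ) (Y : ℕ →₀ ℕ) :
    cmul (contract (Finsupp.single a m) p) Y
      = oslash (cmul (Finsupp.single a m) (otimes Y p)) p := by
  have hp0 : p ≠ 0 := hp.ne_zero
  induction Y using Finsupp.induction with
  | zero => rw [otimes_zero, cmul_zero_right, cmul_zero_right, oslash_zero hp0]
  | single_add y n Y _ _ ihY =>
    rw [cmul_add_right, otimes_add, cmul_add_right, oslash_add _ _ hp0, ihY,
      otimes_single, key_single_single hp]

/-- The key identity: `(A ⊟ p) · Y = (A · (Y ⊗ p)) ⊘ p`. -/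
lemma key {p : ℕ} (hp : p.Prime) (A Y : ℕ →₀ ℕ) :
    cmul (contract A p) Y = oslash (cmul A (otimes Y p)) p := by
  have hp0 : p ≠ 0 := hp.ne_zero
  induction A using Finsupp.induction with
  | zero => rw [contract_zero hp0, cmul_zero_left, cmul_zero_left, oslash_zero hp0]
  | single_add a m A _ _ ih =>
    rw [contract_add _ _ hp0, cmul_add_left, cmul_add_left, oslash_add _ _ hp0, ih,
      key_single hp]

lemma otimes_oslash (X : ℕ →₀ ℕ) {p : ℕ} (hp : p ≠ 0)
    (hdvd : ∀ x ∈ X.support, p ∣ x) : otimes (oslash X p) p = X := by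
  ext x
  by_cases hx : p ∣ x
  · obtain ⟨c, rfl⟩ := hx
    rw [otimes, Finsupp.mapDomain_apply (mul_right_injective₀ hp), oslash_apply _ hp]
  · rw [otimes, Finsupp.mapDomain_notin_range]
    · by_contra h
      exact hx (hdvd x (Finsupp.mem_support_iff.mpr fun h0 => h h0.symm))
    · rintro ⟨c, rfl⟩; exact hx ⟨c, rfl⟩

theorem contract_cmul_oslash (A X : ℕ →₀ ℕ) (hA : Pos A) (hX : Pos X)
    (p : ℕ) (hp : p.Prime) (hdvd : ∀ x ∈ X.support, p ∣ x) :
    cmul (contract A p) (oslash X p) = oslash (cmul A X) p := by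
  conv_rhs => rw [← otimes_oslash X hp.ne_zero hdvd]
  exact key hp A (oslash X p)
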